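/- Let f : ℝ → ℝ be continuous and let u be a solution of the radial equation on an interval J ⊆ (0,∞). Suppose r₀ ∈ J satisfies u'(r₀) = 0, f(u(r₀)) = 0, and u(r₀) is a strict local minimum point of F (i.e. F(s) > F(u(r₀)) for all s ≠ u(r₀) in some neighborhood of u(r₀)). Then u(r) = u(r₀) for every r ∈ J with r ≥ r₀. -/

import Mathlib

open Set Filter MeasureTheory

noncomputable def phim (m x : ℝ) : ℝ := |x| ^ (m - 2) * x

noncomputable def Fint (f : ℝ → ℝ) (s : ℝ) : ℝ := ∫ t in (0:ℝ)..s, f t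

noncomputable def Qfun (N m : ℝ) (f : ℝ → ℝ) (s : ℝ) : ℝ :=
  m * N * Fint f s - (N - m) * s * f s

/-- `u` (with derivative function `u'`) is a solution of the radial quasilinear
equation on the set `J`. -/
def IsSolutionOn (N m : ℝ) (f : ℝ → ℝ) (J : Set ℝ) (u u' : ℝ → ℝ) : Prop :=
  (∀ r ∈ J, HasDerivWithinAt u (u' r) J r) ∧ ContinuousOn u' J ∧
    ∃ w' : ℝ → ℝ,
      (∀ r ∈ J ∩ Set.Ioi (0:ℝ),
        HasDerivWithinAt (fun t => phim m (u' t)) (w' r) (J ∩ Set.Ioi (0:ℝ)) r) ∧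
      ContinuousOn w' (J ∩ Set.Ioi (0:ℝ)) ∧
      ∀ r ∈ J ∩ Set.Ioi (0:ℝ), w' r + ((N - 1) / r) * phim m (u' r) + f (u r) = 0

def IsIVPSolutionOn (N m : ℝ) (f : ℝ → ℝ) (α : ℝ) (J : Set ℝ) (u u' : ℝ → ℝ) : Prop :=
  IsSolutionOn N m f J u u' ∧ u 0 = α ∧ u' 0 = 0

/-- Admissible domains for the IVP: `[0,∞)` or `[0,R)` with `0 < R`. -/
def IVPDomain (J : Set ℝ) : Prop :=
  J = Set.Ici (0:ℝ) ∨ ∃ R : ℝ, 0 < R ∧ J = Set.Ico (0:ℝ) R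

/-- The solution `u` of the IVP on `J` cannot be extended to a solution on a
strictly larger admissible domain. -/
def Noncontinuable (N m : ℝ) (f : ℝ → ℝ) (α : ℝ) (J : Set ℝ) (u u' : ℝ → ℝ) : Prop :=
  ∀ J' : Set ℝ, IVPDomain J' → J ⊂ J' →
    ¬ ∃ v v' : ℝ → ℝ, IsIVPSolutionOn N m f α J' v v' ∧ Set.EqOn v u J ∧ Set.EqOn v' u' J

open Classical in
/-- The filter describing the approach to the right endpoint of an IVP domain. -/
noncomputable def domEnd (J : Set ℝ) : Filter ℝ :=
  if J = Set.Ici (0:ℝ) then Filter.atTop else nhdsWithin (sSup J) (Set.Iio (sSup J))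

def LocLipschitzOn (f : ℝ → ℝ) (S : Set ℝ) : Prop :=
  ∀ x ∈ S, ∃ ε : ℝ, 0 < ε ∧ ∃ K : NNReal, LipschitzOnWith K f (Metric.ball x ε ∩ S)

/-- Assumption (f₂). -/
structure Hf2 (f : ℝ → ℝ) (βm βp : ℝ) (γm γp : EReal) : Prop where
  hβm : βm < 0
  hβp : 0 < βp
  hFneg : ∀ s : ℝ, s ∈ Set.Ioo βm βp → s ≠ 0 → Fint f s < 0
  hFβm : Fint f βm = 0
  hFβp : Fint f βp = 0
  hγp : (βp : EReal) < γp
  hγm : γm < (βm : EReal)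
  hfpos : ∀ s : ℝ, βp < s → (s : EReal) < γp → 0 < f s
  hfneg : ∀ s : ℝ, γm < (s : EReal) → s < βm → f s < 0
  hγpzero : ∀ s : ℝ, (s : EReal) = γp → f s = 0
  hγmzero : ∀ s : ℝ, (s : EReal) = γm → f s = 0
  hlim : ∃ L : EReal,
    Filter.Tendsto (fun s : ℝ => (Fint f s : EReal))
      (Filter.comap Real.toEReal (nhdsWithin γp (Set.Iio γp))) (nhds L) ∧
    Filter.Tendsto (fun s : ℝ => (Fint f s : EReal))
      (Filter.comap Real.toEReal (nhdsWithin γm (Set.Ioi γm))) (nhds L)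
  hlip : LocLipschitzOn f {s : ℝ | (γm < (s : EReal) ∧ s < 0) ∨ (0 < s ∧ (s : EReal) < γp)}

/-- Assumption (f₃). -/
def Hf3 (N m : ℝ) (f : ℝ → ℝ) (βm βp : ℝ) (γm γp : EReal) : Prop :=
  (γp = ⊤ →
    (∃ βb : ℝ, βp < βb ∧ ∀ s : ℝ, βb ≤ s → 0 ≤ Qfun N m f s) ∧
    (∃ θ : ℝ, θ ∈ Set.Ioo (0:ℝ) 1 ∧
      Filter.Tendsto (fun s : ℝ =>
        sInf ((fun p : ℝ × ℝ =>
          Qfun N m f p.2 * ((|s| ^ (m - 2) * s) / f p.1) ^ (N / m)) ''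
            (Set.Icc (θ * s) s ×ˢ Set.Icc (θ * s) s)))
        Filter.atTop Filter.atTop)) ∧
  (γm = ⊥ →
    (∃ βb : ℝ, -βb < βm ∧ ∀ s : ℝ, s ≤ -βb → 0 ≤ Qfun N m f s) ∧
    (∃ θ : ℝ, θ ∈ Set.Ioo (0:ℝ) 1 ∧
      Filter.Tendsto (fun s : ℝ =>
        sInf ((fun p : ℝ × ℝ =>
          Qfun N m f p.2 * ((|s| ^ (m - 2) * s) / f p.1) ^ (N / m)) ''
            (Set.Icc s (θ * s) ×ˢ Set.Icc s (θ * s))))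
        Filter.atBot Filter.atTop))

/-- Assumption (f₄). -/
def Hf4 (N m : ℝ) (f : ℝ → ℝ) (βm βp : ℝ) (γm γp : EReal) : Prop :=
  (γp ≠ ⊤ → ∃ L₀ : ℝ, 0 < L₀ ∧ ∃ βb : ℝ, βp < βb ∧
    ∀ s : ℝ, βb ≤ s → (s : EReal) < γp → f s ≤ L₀ * (γp.toReal - s) ^ (m - 1)) ∧
  (γm ≠ ⊥ → ∃ L₀ : ℝ, 0 < L₀ ∧ ∃ βb : ℝ, -βm < βb ∧
    ∀ s : ℝ, γm < (s : EReal) → s ≤ -βb → -f s ≤ L₀ * (s - γm.toReal) ^ (m - 1))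

lemma phim_self_mul (m : ℝ) (hm : 1 < m) (v : ℝ) : v * phim m v = |v| ^ m := by
  rcases eq_or_ne v 0 with rfl | hv
  · simp [phim, Real.zero_rpow (by norm_num; linarith : m ≠ (0:ℝ))]
  · have hav : (0:ℝ) < |v| := abs_pos.mpr hv
    have h2 : v * (|v| ^ (m-2) * v) = |v| ^ (m-2) * |v| ^ (2:ℝ) := by
      rw [show |v| ^ (2:ℝ) = |v| ^ (2:ℕ) by rw [← Real.rpow_natCast]; norm_num, sq_abs]
      ring
    rw [phim, h2, ← Real.rpow_add hav]
    norm_num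

lemma abs_phim (m : ℝ) (hm : 1 < m) (v : ℝ) : |phim m v| = |v| ^ (m - 1) := by
  rcases eq_or_ne v 0 with rfl | hv
  · simp [phim, Real.zero_rpow (by intro h; linarith [h] : m - 1 ≠ (0:ℝ))]
  · rw [phim, abs_mul, abs_of_nonneg (Real.rpow_nonneg (abs_nonneg v) _)]
    rw [show m - 1 = m - 2 + 1 by ring, Real.rpow_add_one (abs_ne_zero.mpr hv)]

lemma phim_phim (m : ℝ) (hm : 1 < m) (v : ℝ) :
    phim (m / (m-1)) (phim m v) = v := by
  rcases eq_or_ne v 0 with rfl | hv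
  · simp [phim]
  · have hav : (0:ℝ) < |v| := abs_pos.mpr hv
    have hm1 : m - 1 ≠ 0 := by intro h; linarith [h]
    rw [phim, abs_phim m hm v, ← Real.rpow_mul (abs_nonneg v)]
    have he : (m - 1) * (m / (m-1) - 2) = 2 - m := by field_simp; ring
    rw [he, phim, ← mul_assoc, ← Real.rpow_add hav]
    norm_num

lemma hasDerivAt_abs_rpow_div (p : ℝ) (hp : 1 < p) (x : ℝ) :
    HasDerivAt (fun w : ℝ => |w| ^ p / p) (phim p x) x := by
  have hp0 : (0:ℝ) < p := by linarith
  have h := (hasDerivAt_abs_rpow x hp).div_const p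
  refine h.congr_deriv (Eq.symm ?_)
  rw [phim]
  field_simp

/-- if `u'(r₀) = 0`, `f(u(r₀)) = 0` and `u(r₀)` is a strict local
minimum point of `F`, then `u` is constant from `r₀` on. -/
theorem constant_after_double_critical
    (N m : ℝ) (hm : 1 < m) (hNm : m ≤ N) (f : ℝ → ℝ) (hf : Continuous f)
    (J : Set ℝ) (hJc : J.OrdConnected) (hJ0 : J ⊆ Set.Ioi (0:ℝ))
    (u u' : ℝ → ℝ) (hu : IsSolutionOn N m f J u u')
    (r₀ : ℝ) (hr₀ : r₀ ∈ J) (hd : u' r₀ = 0) (hfz : f (u r₀) = 0)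
    (hmin : ∃ ε : ℝ, 0 < ε ∧ ∀ s : ℝ, |s - u r₀| < ε → s ≠ u r₀ →
      Fint f (u r₀) < Fint f s) :
    ∀ r ∈ J, r₀ ≤ r → u r = u r₀ := by
  obtain ⟨hud, hu'c, w', hw', hw'c, heqn⟩ := hu
  have hJJ : J ∩ Set.Ioi (0:ℝ) = J := Set.inter_eq_left.mpr hJ0
  rw [hJJ] at hw' hw'c heqn
  set p := m / (m - 1) with hp_def
  have hm1 : (0:ℝ) < m - 1 := by linarith
  have hp : 1 < p := (one_lt_div hm1).mpr (by linarith)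
  set E : ℝ → ℝ := fun r => |phim m (u' r)| ^ p / p + Fint f (u r) with hEdef
  have hFTC : ∀ y : ℝ, HasDerivAt (Fint f) (f y) y := fun y =>
    intervalIntegral.integral_hasDerivAt_right (hf.intervalIntegrable 0 y)
      (hf.stronglyMeasurable.stronglyMeasurableAtFilter) hf.continuousAt
  have hEderiv : ∀ r ∈ J, HasDerivWithinAt E (-(((N - 1) / r) * |u' r| ^ m)) J r := by
    intro r hr
    have h1 : HasDerivWithinAt (fun t => |phim m (u' t)| ^ p / p) (u' r * w' r) J r := by
      have hch := (hasDerivAt_abs_rpow_div p hp (phim m (u' r))).comp_hasDerivWithinAt r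
        (hw' r hr)
      rwa [phim_phim m hm (u' r)] at hch
    have h2 : HasDerivWithinAt (fun t => Fint f (u t)) (f (u r) * u' r) J r :=
      (hFTC (u r)).comp_hasDerivWithinAt r (hud r hr)
    have h3 := h1.add h2
    refine h3.congr_deriv (Eq.symm ?_)
    have h4 := heqn r hr
    have h5 := phim_self_mul m hm (u' r)
    linear_combination (-(u' r)) * h4 + ((N - 1) / r) * h5
  have hconv : Convex ℝ J := hJc.convex
  have hEcont : ContinuousOn E J := by
    apply ContinuousOn.add
    · exact ((continuous_abs.rpow_const (fun x => Or.inr (by linarith))).div_const p).comp_continuousOn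
        (fun r hr => (hw' r hr).continuousWithinAt)
    · have hFc : Continuous (Fint f) := by
        apply continuous_iff_continuousAt.mpr
        exact fun y => (hFTC y).continuousAt
      exact hFc.comp_continuousOn (fun r hr => (hud r hr).continuousWithinAt)
  have hEda : ∀ x ∈ interior J, HasDerivAt E (-(((N - 1) / x) * |u' x| ^ m)) x :=
    fun x hx => (hEderiv x (interior_subset hx)).hasDerivAt
      (mem_interior_iff_mem_nhds.mp hx)
  have hanti : AntitoneOn E J := by
    apply antitoneOn_of_deriv_nonpos hconv hEcont
    · exact fun x hx => (hEda x hx).differentiableAt.differentiableWithinAt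
    · intro x hx
      rw [(hEda x hx).deriv]
      have hxpos : (0:ℝ) < x := hJ0 (interior_subset hx)
      have h1 : 0 ≤ (N - 1) / x := div_nonneg (by linarith) hxpos.le
      have h2 : 0 ≤ |u' x| ^ m := Real.rpow_nonneg (abs_nonneg _) m
      have := mul_nonneg h1 h2
      linarith
  have hE0 : E r₀ = Fint f (u r₀) := by
    have hph : phim m (u' r₀) = 0 := by rw [hd, phim]; simp
    simp only [hEdef, hph, abs_zero, Real.zero_rpow (by linarith : p ≠ 0), zero_div, zero_add]
  have key : ∀ r ∈ J, r₀ ≤ r → Fint f (u r) ≤ Fint f (u r₀) := by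
    intro r hr hrr
    have h1 := hanti hr₀ hr hrr
    rw [hE0] at h1
    have h2 : 0 ≤ |phim m (u' r)| ^ p / p :=
      div_nonneg (Real.rpow_nonneg (abs_nonneg _) p) (by linarith)
    simp only [hEdef] at h1
    linarith
  obtain ⟨ε, hε, hεF⟩ := hmin
  have step : ∀ r ∈ J, r₀ ≤ r → |u r - u r₀| < ε → u r = u r₀ := by
    intro r hr hrr hdist
    by_contra hne
    exact absurd (key r hr hrr) (not_le.mpr (hεF (u r) hdist hne))
  intro r1 hr1 hr01
  have hIcc : Set.Icc r₀ r1 ⊆ J := hJc.out hr₀ hr1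
  have hucont : ContinuousOn u (Set.Icc r₀ r1) :=
    fun r hr => ((hud r (hIcc hr)).continuousWithinAt.mono hIcc)
  set S := {r ∈ Set.Icc r₀ r1 | u r = u r₀} with hSdef
  have hSne : S.Nonempty := ⟨r₀, ⟨Set.left_mem_Icc.mpr hr01, rfl⟩⟩
  have hSbdd : BddAbove S := ⟨r1, fun x hx => hx.1.2⟩
  have hSclosed : IsClosed S := by
    have := hucont.preimage_isClosed_of_isClosed isClosed_Icc
      (isClosed_singleton (x := u r₀))
    exact this
  set c := sSup S with hcdef
  have hcS : c ∈ S := hSclosed.csSup_mem hSne hSbdd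
  have hcr1 : c = r1 := by
    by_contra hne
    have hclt : c < r1 := lt_of_le_of_ne hcS.1.2 hne
    have hcont := hucont c hcS.1
    rw [Metric.continuousWithinAt_iff] at hcont
    obtain ⟨δ, hδ, hball⟩ := hcont ε hε
    set t := min (c + δ / 2) r1 with htdef
    have hct : c < t := lt_min (by linarith) hclt
    have htIcc : t ∈ Set.Icc r₀ r1 := ⟨le_trans hcS.1.1 hct.le, min_le_right _ _⟩
    have hdist : dist t c < δ := by
      rw [Real.dist_eq, abs_of_pos (by linarith : (0:ℝ) < t - c)]
      have h1 : t ≤ c + δ / 2 := min_le_left _ _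
      linarith
    have hut : dist (u t) (u c) < ε := hball htIcc hdist
    have hut2 : u t = u r₀ := by
      apply step t (hIcc htIcc) htIcc.1
      rw [Real.dist_eq, hcS.2] at hut
      exact hut
    exact absurd (le_csSup hSbdd ⟨htIcc, hut2⟩) (not_le.mpr hct)
  rw [← hcr1]
  exact hcS.2
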